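/- The series Φ(b,z) = ₁φ₁(0; b; q², z) satisfies the three-term relation (b/z)(Φ(b,q²z) − Φ(b,z)) + Φ(b,z) + (q²/z)(Φ(b,z/q²) − Φ(b,z)) = 0. -/

import Mathlib

open scoped BigOperators

/-- The q-Pochhammer symbol (a;q)_n. -/
noncomputable def qPoch (a q : ℂ) (n : ℕ) : ℂ :=
  ∏ k ∈ Finset.range n, (1 - a * q ^ k)

/-- Φ(b,z) = ₁φ₁(0; b; q², z). -/
noncomputable def phi11zero (q b z : ℂ) : ℂ :=
  ∑' n : ℕ, (-1) ^ n * q ^ (n * (n - 1)) * z ^ n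
    / (qPoch b (q ^ 2) n * qPoch (q ^ 2) (q ^ 2) n)

/-- The coefficient of `z^n` in Φ. -/
noncomputable def coefC (q b : ℂ) (n : ℕ) : ℂ :=
  (-1) ^ n * q ^ (n * (n - 1)) / (qPoch b (q ^ 2) n * qPoch (q ^ 2) (q ^ 2) n)

lemma phi_eq (q b w : ℂ) : phi11zero q b w = ∑' n : ℕ, coefC q b n * w ^ n := by
  unfold phi11zero coefC
  exact tsum_congr fun n => by ring

lemma one_sub_qq_ne (q : ℂ) (hq : ‖q‖ < 1) (k : ℕ) :
    (1 : ℂ) - q ^ 2 * (q ^ 2) ^ k ≠ 0 := by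
  have h : ‖q ^ 2 * (q ^ 2) ^ k‖ < 1 := by
    have : q ^ 2 * (q ^ 2) ^ k = q ^ (2 + 2 * k) := by
      rw [pow_add, pow_mul]
    rw [this, norm_pow]
    exact pow_lt_one₀ (norm_nonneg q) hq (by omega)
  intro hcon
  rw [sub_eq_zero] at hcon
  rw [← hcon] at h
  simp at h

lemma qPoch_qq_ne (q : ℂ) (hq : ‖q‖ < 1) (n : ℕ) :
    qPoch (q ^ 2) (q ^ 2) n ≠ 0 := by
  unfold qPoch
  exact Finset.prod_ne_zero_iff.2 fun k _ => one_sub_qq_ne q hq k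

lemma one_sub_bq_ne (q b : ℂ) (hb : ∀ n : ℕ, qPoch b (q ^ 2) n ≠ 0) (k : ℕ) :
    (1 : ℂ) - b * (q ^ 2) ^ k ≠ 0 := by
  have := hb (k + 1)
  unfold qPoch at this
  exact (Finset.prod_ne_zero_iff.1 this) k (Finset.self_mem_range_succ k)

lemma coefC_ne (q b : ℂ) (hq : ‖q‖ < 1) (hq0 : q ≠ 0)
    (hb : ∀ n : ℕ, qPoch b (q ^ 2) n ≠ 0) (n : ℕ) : coefC q b n ≠ 0 := by
  unfold coefC
  apply div_ne_zero
  · exact mul_ne_zero (pow_ne_zero _ (by norm_num)) (pow_ne_zero _ hq0)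
  · exact mul_ne_zero (hb n) (qPoch_qq_ne q hq n)

lemma coefC_succ (q b : ℂ) (hq : ‖q‖ < 1) (hq0 : q ≠ 0)
    (hb : ∀ n : ℕ, qPoch b (q ^ 2) n ≠ 0) (n : ℕ) :
    coefC q b (n + 1) =
      coefC q b n * (-(q ^ 2) ^ n)
        / ((1 - b * (q ^ 2) ^ n) * (1 - q ^ 2 * (q ^ 2) ^ n)) := by
  have he : (n + 1) * ((n + 1) - 1) = n * (n - 1) + 2 * n := by
    cases n with
    | zero => rfl
    | succ m => simp [Nat.succ_sub_one]; ring
  unfold coefC qPoch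
  rw [Finset.prod_range_succ, Finset.prod_range_succ, he, pow_add, pow_mul]
  have h1 := one_sub_bq_ne q b hb n
  have h2 := one_sub_qq_ne q hq n
  have h3 := hb n
  have h4 := qPoch_qq_ne q hq n
  unfold qPoch at h3 h4
  field_simp
  ring

lemma summable_term (q b : ℂ) (hq : ‖q‖ < 1) (hq0 : q ≠ 0)
    (hb : ∀ n : ℕ, qPoch b (q ^ 2) n ≠ 0) (w : ℂ) (hw : w ≠ 0) :
    Summable (fun n : ℕ => coefC q b n * w ^ n) := by
  have hne : ∀ n : ℕ, coefC q b n * w ^ n ≠ 0 := fun n =>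
    mul_ne_zero (coefC_ne q b hq hq0 hb n) (pow_ne_zero n hw)
  have hqq : ‖q ^ 2‖ < 1 := by
    rw [norm_pow]
    exact pow_lt_one₀ (norm_nonneg q) hq (by omega)
  have hrat : ∀ n : ℕ,
      ‖coefC q b (n + 1) * w ^ (n + 1)‖ / ‖coefC q b n * w ^ n‖ =
        ‖-(q ^ 2) ^ n * w / ((1 - b * (q ^ 2) ^ n) * (1 - q ^ 2 * (q ^ 2) ^ n))‖ := by
    intro n
    rw [← norm_div]
    congr 1
    rw [coefC_succ q b hq hq0 hb n]
    have h1 := one_sub_bq_ne q b hb n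
    have h2 := one_sub_qq_ne q hq n
    have h5 := coefC_ne q b hq hq0 hb n
    have h6 : w ^ n ≠ 0 := pow_ne_zero n hw
    field_simp
    ring
  have htend : Filter.Tendsto
      (fun n : ℕ => -(q ^ 2) ^ n * w / ((1 - b * (q ^ 2) ^ n) * (1 - q ^ 2 * (q ^ 2) ^ n)))
      Filter.atTop (nhds 0) := by
    have h0 : Filter.Tendsto (fun n : ℕ => (q ^ 2) ^ n) Filter.atTop (nhds 0) :=
      tendsto_pow_atTop_nhds_zero_of_norm_lt_one hqq
    have hnum : Filter.Tendsto (fun n : ℕ => -(q ^ 2) ^ n * w) Filter.atTop (nhds 0) := by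
      simpa using (h0.neg.mul_const w)
    have hden : Filter.Tendsto
        (fun n : ℕ => (1 - b * (q ^ 2) ^ n) * (1 - q ^ 2 * (q ^ 2) ^ n))
        Filter.atTop (nhds 1) := by
      have hb' : Filter.Tendsto (fun n : ℕ => 1 - b * (q ^ 2) ^ n) Filter.atTop (nhds 1) := by
        simpa using (tendsto_const_nhds (x := (1 : ℂ))).sub ((h0.const_mul b))
      have hq' : Filter.Tendsto (fun n : ℕ => 1 - q ^ 2 * (q ^ 2) ^ n) Filter.atTop (nhds 1) := by
        simpa using (tendsto_const_nhds (x := (1 : ℂ))).sub ((h0.const_mul (q ^ 2)))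
      simpa using hb'.mul hq'
    simpa [Pi.div_def] using hnum.div hden one_ne_zero
  have htendn : Filter.Tendsto
      (fun n : ℕ => ‖coefC q b (n + 1) * w ^ (n + 1)‖ / ‖coefC q b n * w ^ n‖)
      Filter.atTop (nhds 0) := by
    have := htend.norm
    rw [norm_zero] at this
    exact this.congr fun n => (hrat n).symm
  exact summable_of_ratio_test_tendsto_lt_one zero_lt_one
    (Filter.Eventually.of_forall hne) htendn

lemma pointwise_zero (q b z : ℂ) (hq : ‖q‖ < 1) (hq0 : q ≠ 0) (hz : z ≠ 0)
    (hb : ∀ n : ℕ, qPoch b (q ^ 2) n ≠ 0) (n : ℕ) :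
    (b / z) * (coefC q b (n + 1) * (q ^ 2 * z) ^ (n + 1) - coefC q b (n + 1) * z ^ (n + 1))
      + coefC q b n * z ^ n
      + (q ^ 2 / z) * (coefC q b (n + 1) * (z / q ^ 2) ^ (n + 1)
          - coefC q b (n + 1) * z ^ (n + 1)) = 0 := by
  have h1 := one_sub_bq_ne q b hb n
  have h2 := one_sub_qq_ne q hq n
  have hq2 : q ^ 2 ≠ 0 := pow_ne_zero 2 hq0
  have hA : ((q : ℂ) ^ 2) ^ n ≠ 0 := pow_ne_zero n hq2
  have hDelta : ((1 : ℂ) - b * (q ^ 2) ^ n) * (1 - q ^ 2 * (q ^ 2) ^ n) ≠ 0 :=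
    mul_ne_zero h1 h2
  have hC1 : coefC q b (n + 1) * ((1 - b * (q ^ 2) ^ n) * (1 - q ^ 2 * (q ^ 2) ^ n))
      = coefC q b n * (-(q ^ 2) ^ n) :=
    ((div_eq_iff hDelta).1 (coefC_succ q b hq hq0 hb n).symm).symm
  have h0 : coefC q b (n + 1) * ((1 - b * (q ^ 2) ^ n) * (1 - q ^ 2 * (q ^ 2) ^ n))
      + coefC q b n * (q ^ 2) ^ n = 0 := by rw [hC1]; ring
  calc (b / z) * (coefC q b (n + 1) * (q ^ 2 * z) ^ (n + 1) - coefC q b (n + 1) * z ^ (n + 1))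
        + coefC q b n * z ^ n
        + (q ^ 2 / z) * (coefC q b (n + 1) * (z / q ^ 2) ^ (n + 1)
            - coefC q b (n + 1) * z ^ (n + 1))
      = (z ^ n / (q ^ 2) ^ n) *
          (coefC q b (n + 1) * ((1 - b * (q ^ 2) ^ n) * (1 - q ^ 2 * (q ^ 2) ^ n))
            + coefC q b n * (q ^ 2) ^ n) := by
        field_simp
        rw [div_pow]
        field_simp
        ring
    _ = 0 := by rw [h0, mul_zero]

/-- Three-term relation for Φ(b,z) = ₁φ₁(0;b;q²,z):
(b/z)(Φ(b,q²z) − Φ(b,z)) + Φ(b,z) + (q²/z)(Φ(b,z/q²) − Φ(b,z)) = 0. -/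
theorem phi11zero_three_term (q b z : ℂ) (hq : ‖q‖ < 1) (hq0 : q ≠ 0) (hz : z ≠ 0)
    (hb : ∀ n : ℕ, qPoch b (q ^ 2) n ≠ 0) :
    (b / z) * (phi11zero q b (q ^ 2 * z) - phi11zero q b z)
      + phi11zero q b z
      + (q ^ 2 / z) * (phi11zero q b (z / q ^ 2) - phi11zero q b z) = 0 := by
  have hq2 : q ^ 2 ≠ 0 := pow_ne_zero 2 hq0
  have s1 := summable_term q b hq hq0 hb (q ^ 2 * z) (mul_ne_zero hq2 hz)
  have s2 := summable_term q b hq hq0 hb z hz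
  have s3 := summable_term q b hq hq0 hb (z / q ^ 2) (div_ne_zero hz hq2)
  set g1 : ℕ → ℂ := fun n =>
    (b / z) * (coefC q b n * (q ^ 2 * z) ^ n - coefC q b n * z ^ n) with hg1
  set g3 : ℕ → ℂ := fun n =>
    (q ^ 2 / z) * (coefC q b n * (z / q ^ 2) ^ n - coefC q b n * z ^ n) with hg3
  have sg1 : Summable g1 := (s1.sub s2).mul_left _
  have sg3 : Summable g3 := (s3.sub s2).mul_left _
  have e1 : (b / z) * (phi11zero q b (q ^ 2 * z) - phi11zero q b z) = ∑' n, g1 n := by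
    rw [phi_eq, phi_eq, ← Summable.tsum_sub s1 s2, ← tsum_mul_left]
  have e3 : (q ^ 2 / z) * (phi11zero q b (z / q ^ 2) - phi11zero q b z) = ∑' n, g3 n := by
    rw [phi_eq, phi_eq, ← Summable.tsum_sub s3 s2, ← tsum_mul_left]
  have e2 : phi11zero q b z = ∑' n, coefC q b n * z ^ n := phi_eq q b z
  rw [e1, e3, e2]
  have t1 : ∑' n, g1 n = ∑' n, g1 (n + 1) := by
    rw [Summable.tsum_eq_zero_add sg1]
    simp [hg1]
  have t3 : ∑' n, g3 n = ∑' n, g3 (n + 1) := by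
    rw [Summable.tsum_eq_zero_add sg3]
    simp [hg3]
  rw [t1, t3]
  have sg1' : Summable (fun n => g1 (n + 1)) := (summable_nat_add_iff 1).2 sg1
  have sg3' : Summable (fun n => g3 (n + 1)) := (summable_nat_add_iff 1).2 sg3
  rw [← Summable.tsum_add sg1' s2, ← Summable.tsum_add (sg1'.add s2) sg3']
  have : ∀ n : ℕ, g1 (n + 1) + coefC q b n * z ^ n + g3 (n + 1) = 0 := fun n =>
    pointwise_zero q b z hq hq0 hz hb n
  calc ∑' n, (g1 (n + 1) + coefC q b n * z ^ n + g3 (n + 1))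
      = ∑' n : ℕ, (0 : ℂ) := tsum_congr this
    _ = 0 := tsum_zero
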